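/- Let n ≥ 1 and 0 < β ≤ 1, and define p(k,ξ) = ( (1 + |ξ|²) + (1 + |k|²)^{1/(1+2β)} )^{β} for (k,ξ) ∈ ℝⁿ × ℝⁿ. Then there is a constant C > 0, depending only on n and β, such that for all k, ξ, ξ' ∈ ℝⁿ: if β ≤ 1/2 then |p(k,ξ) − p(k,ξ')| ≤ C |ξ − ξ'|, and if β ≥ 1/2 then |p(k,ξ) − p(k,ξ')| ≤ C |ξ − ξ'| ( (1+|ξ|²)^{(2β−1)/2} + (1+|ξ'|²)^{(2β−1)/2} ). -/

import Mathlib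

noncomputable section

open Real

private lemma hasFDerivAt_aux {n : ℕ} (β c : ℝ) (hβ0 : 0 < β) (hc : 1 ≤ c)
    (η : EuclideanSpace ℝ (Fin n)) :
    HasFDerivAt (fun η : EuclideanSpace ℝ (Fin n) => (c + ‖η‖ ^ 2) ^ β)
      ((β * (c + ‖η‖ ^ 2) ^ (β - 1)) • (2 • innerSL ℝ η)) η := by
  have hpos : (0:ℝ) < c + ‖η‖ ^ 2 := by positivity
  have h2 : HasFDerivAt (fun η : EuclideanSpace ℝ (Fin n) => c + ‖η‖ ^ 2)
      (2 • innerSL ℝ η) η := by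
    simpa using ((hasStrictFDerivAt_norm_sq η).hasFDerivAt.const_add c)
  have h3 : HasDerivAt (fun x : ℝ => x ^ β) (β * (c + ‖η‖ ^ 2) ^ (β - 1)) (c + ‖η‖ ^ 2) :=
    Real.hasDerivAt_rpow_const (Or.inl hpos.ne')
  exact h3.comp_hasFDerivAt η h2

private lemma norm_deriv_aux {n : ℕ} (β c : ℝ) (hβ0 : 0 < β) (hβ1 : β ≤ 1) (hc : 1 ≤ c)
    (η : EuclideanSpace ℝ (Fin n)) :
    ‖(β * (c + ‖η‖ ^ 2) ^ (β - 1)) • (2 • innerSL ℝ η)‖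
      ≤ 2 * β * (1 + ‖η‖ ^ 2) ^ (β - 1/2) := by
  have hpos : (0:ℝ) < c + ‖η‖ ^ 2 := by positivity
  have h1 : ‖(β * (c + ‖η‖ ^ 2) ^ (β - 1)) • (2 • innerSL ℝ η)‖
      ≤ (β * (c + ‖η‖ ^ 2) ^ (β - 1)) * (2 * ‖η‖) := by
    apply ContinuousLinearMap.opNorm_le_bound
    · positivity
    · intro v
      have : ((β * (c + ‖η‖ ^ 2) ^ (β - 1)) • (2 • innerSL ℝ η)) v
          = (β * (c + ‖η‖ ^ 2) ^ (β - 1)) * (2 * (inner ℝ η v : ℝ)) := by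
        simp
      rw [this, Real.norm_eq_abs, abs_mul, abs_mul]
      have hb : |β * (c + ‖η‖ ^ 2) ^ (β - 1)| = β * (c + ‖η‖ ^ 2) ^ (β - 1) := by
        rw [abs_of_nonneg]; positivity
      rw [abs_mul] at *
      calc |β| * |(c + ‖η‖ ^ 2) ^ (β - 1)| * (|2| * |(inner ℝ η v : ℝ)|)
          ≤ |β| * |(c + ‖η‖ ^ 2) ^ (β - 1)| * (|2| * (‖η‖ * ‖v‖)) := by
            gcongr
            exact abs_real_inner_le_norm η v
        _ = β * (c + ‖η‖ ^ 2) ^ (β - 1) * (2 * ‖η‖) * ‖v‖ := by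
            rw [abs_of_nonneg hβ0.le, abs_of_nonneg (by positivity : (0:ℝ) ≤ (c + ‖η‖ ^ 2) ^ (β - 1)), abs_of_nonneg (by norm_num : (0:ℝ) ≤ 2)]
            ring
  refine h1.trans ?_
  have h2 : (c + ‖η‖ ^ 2) ^ (β - 1) ≤ (1 + ‖η‖ ^ 2) ^ (β - 1) :=
    Real.rpow_le_rpow_of_nonpos (by positivity) (by linarith) (by linarith)
  have h3 : ‖η‖ ≤ (1 + ‖η‖ ^ 2) ^ ((1:ℝ)/2) := by
    rw [← Real.sqrt_eq_rpow]
    rw [Real.le_sqrt (norm_nonneg η) (by positivity)]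
    nlinarith [sq_nonneg ‖η‖]
  calc β * (c + ‖η‖ ^ 2) ^ (β - 1) * (2 * ‖η‖)
      ≤ β * (1 + ‖η‖ ^ 2) ^ (β - 1) * (2 * (1 + ‖η‖ ^ 2) ^ ((1:ℝ)/2)) := by
        gcongr
    _ = 2 * β * ((1 + ‖η‖ ^ 2) ^ (β - 1) * (1 + ‖η‖ ^ 2) ^ ((1:ℝ)/2)) := by ring
    _ = 2 * β * (1 + ‖η‖ ^ 2) ^ (β - 1/2) := by
        rw [← Real.rpow_add (by positivity)]
        ring_nf

private lemma key_mvt {n : ℕ} (β c : ℝ) (hβ0 : 0 < β) (hβ1 : β ≤ 1) (hc : 1 ≤ c)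
    (M : ℝ) (ξ ξ' : EuclideanSpace ℝ (Fin n))
    (hM : ∀ η : EuclideanSpace ℝ (Fin n), ‖η‖ ≤ max ‖ξ‖ ‖ξ'‖ →
      2 * β * (1 + ‖η‖ ^ 2) ^ (β - 1/2) ≤ M) :
    |(c + ‖ξ‖ ^ 2) ^ β - (c + ‖ξ'‖ ^ 2) ^ β| ≤ M * ‖ξ - ξ'‖ := by
  set R := max ‖ξ‖ ‖ξ'‖ with hR
  have hconv : Convex ℝ (Metric.closedBall (0 : EuclideanSpace ℝ (Fin n)) R) :=
    convex_closedBall _ _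
  have hder : ∀ η ∈ Metric.closedBall (0 : EuclideanSpace ℝ (Fin n)) R,
      HasFDerivWithinAt (fun η : EuclideanSpace ℝ (Fin n) => (c + ‖η‖ ^ 2) ^ β)
        ((β * (c + ‖η‖ ^ 2) ^ (β - 1)) • (2 • innerSL ℝ η))
        (Metric.closedBall (0 : EuclideanSpace ℝ (Fin n)) R) η :=
    fun η _ => (hasFDerivAt_aux β c hβ0 hc η).hasFDerivWithinAt
  have hbd : ∀ η ∈ Metric.closedBall (0 : EuclideanSpace ℝ (Fin n)) R,
      ‖(β * (c + ‖η‖ ^ 2) ^ (β - 1)) • (2 • innerSL ℝ η)‖ ≤ M := by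
    intro η hη
    rw [Metric.mem_closedBall, dist_zero_right] at hη
    exact (norm_deriv_aux β c hβ0 hβ1 hc η).trans (hM η hη)
  have hξ : ξ ∈ Metric.closedBall (0 : EuclideanSpace ℝ (Fin n)) R := by
    rw [Metric.mem_closedBall, dist_zero_right]; exact le_max_left _ _
  have hξ' : ξ' ∈ Metric.closedBall (0 : EuclideanSpace ℝ (Fin n)) R := by
    rw [Metric.mem_closedBall, dist_zero_right]; exact le_max_right _ _
  have := hconv.norm_image_sub_le_of_norm_hasFDerivWithin_le hder hbd hξ' hξ
  simpa [Real.norm_eq_abs] using this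


/-- The symbol `p(k,ξ) = ((1+|ξ|²) + (1+|k|²)^{1/(1+2β)})^β` of the multiplier
`P = (⟨D_v⟩² + ⟨D_x⟩^{2/(1+2β)})^β`. -/
def psym (n : ℕ) (β : ℝ) (k ξ : EuclideanSpace ℝ (Fin n)) : ℝ :=
  ((1 + ‖ξ‖ ^ (2 : ℝ)) + (1 + ‖k‖ ^ (2 : ℝ)) ^ (1 / (1 + 2 * β))) ^ β

/-- Lipschitz-type estimates for the symbol p in the velocity-frequency variable ξ:
unweighted for β ≤ 1/2, weighted by ⟨ξ⟩^{2β-1} + ⟨ξ'⟩^{2β-1} for β ≥ 1/2. -/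
theorem psym_lipschitz_xi (n : ℕ) (hn : 1 ≤ n) (β : ℝ) (hβ0 : 0 < β) (hβ1 : β ≤ 1) :
    ∃ C > 0, ∀ k ξ ξ' : EuclideanSpace ℝ (Fin n),
      (β ≤ 1 / 2 → |psym n β k ξ - psym n β k ξ'| ≤ C * ‖ξ - ξ'‖) ∧
      (1 / 2 ≤ β → |psym n β k ξ - psym n β k ξ'| ≤
        C * ‖ξ - ξ'‖ * ((1 + ‖ξ‖ ^ (2 : ℝ)) ^ ((2 * β - 1) / 2) +
          (1 + ‖ξ'‖ ^ (2 : ℝ)) ^ ((2 * β - 1) / 2))) := by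
  refine ⟨2, by norm_num, fun k ξ ξ' => ?_⟩
  set t := (1 + ‖k‖ ^ (2 : ℝ)) ^ (1 / (1 + 2 * β)) with ht
  have ht0 : 0 ≤ t := Real.rpow_nonneg (by positivity) _
  set c := 1 + t with hcdef
  have hc : 1 ≤ c := by linarith
  have hr2 : ∀ ζ : EuclideanSpace ℝ (Fin n), ‖ζ‖ ^ (2 : ℝ) = ‖ζ‖ ^ 2 :=
    fun ζ => Real.rpow_two _
  have hp : ∀ ζ : EuclideanSpace ℝ (Fin n), psym n β k ζ = (c + ‖ζ‖ ^ 2) ^ β := by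
    intro ζ
    unfold psym
    rw [← ht, hr2]
    congr 1
    ring
  constructor
  · intro hβ
    rw [hp ξ, hp ξ']
    have h := key_mvt β c hβ0 hβ1 hc 2 ξ ξ' ?_
    · linarith
    · intro η _
      have h1 : (1 + ‖η‖ ^ 2) ^ (β - 1/2) ≤ 1 :=
        Real.rpow_le_one_of_one_le_of_nonpos (by nlinarith [sq_nonneg ‖η‖]) (by linarith)
      nlinarith [Real.rpow_nonneg (by positivity : (0:ℝ) ≤ 1 + ‖η‖ ^ 2) (β - 1/2)]
  · intro hβ
    rw [hp ξ, hp ξ']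
    set A := (1 + ‖ξ‖ ^ (2:ℝ)) ^ ((2 * β - 1) / 2) with hA
    set B := (1 + ‖ξ'‖ ^ (2:ℝ)) ^ ((2 * β - 1) / 2) with hB
    have hAeq : A = (1 + ‖ξ‖ ^ 2) ^ (β - 1/2) := by
      rw [hA, hr2]; congr 1; ring
    have hBeq : B = (1 + ‖ξ'‖ ^ 2) ^ (β - 1/2) := by
      rw [hB, hr2]; congr 1; ring
    have hA0 : 0 ≤ (1 + ‖ξ‖ ^ 2) ^ (β - 1/2) := Real.rpow_nonneg (by positivity) _
    have hB0 : 0 ≤ (1 + ‖ξ'‖ ^ 2) ^ (β - 1/2) := Real.rpow_nonneg (by positivity) _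
    have h := key_mvt β c hβ0 hβ1 hc (2 * (A + B)) ξ ξ' ?_
    · calc |(c + ‖ξ‖ ^ 2) ^ β - (c + ‖ξ'‖ ^ 2) ^ β| ≤ 2 * (A + B) * ‖ξ - ξ'‖ := h
        _ = 2 * ‖ξ - ξ'‖ * (A + B) := by ring
    · intro η hη
      have he : (0:ℝ) ≤ β - 1/2 := by linarith
      have hmax : (1 + ‖η‖ ^ 2) ^ (β - 1/2) ≤ (1 + ‖ξ‖ ^ 2) ^ (β - 1/2)
          ∨ (1 + ‖η‖ ^ 2) ^ (β - 1/2) ≤ (1 + ‖ξ'‖ ^ 2) ^ (β - 1/2) := by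
        rcases max_cases ‖ξ‖ ‖ξ'‖ with ⟨hm, _⟩ | ⟨hm, _⟩
        · left
          apply Real.rpow_le_rpow (by positivity) _ he
          rw [hm] at hη
          nlinarith [norm_nonneg η, norm_nonneg ξ]
        · right
          apply Real.rpow_le_rpow (by positivity) _ he
          rw [hm] at hη
          nlinarith [norm_nonneg η, norm_nonneg ξ']
      rw [hAeq, hBeq]
      rcases hmax with hm | hm
      · nlinarith [Real.rpow_nonneg (by positivity : (0:ℝ) ≤ 1 + ‖η‖ ^ 2) (β - 1/2)]
      · nlinarith [Real.rpow_nonneg (by positivity : (0:ℝ) ≤ 1 + ‖η‖ ^ 2) (β - 1/2)]
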